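/- Let n ≥ 2, a ∈ ℝⁿ, D = ℝⁿ∖{a}, x ∈ D, and t > 0 with t|x−a| < 1. Set u = (x−a)/|x−a|, y₁ = x − (t|x−a|²/(1 + t|x−a|)) u and y₂ = x + (t|x−a|²/(1 − t|x−a|)) u. Then j_D(x, y₁) = log(1 + t|x−a|) and j_D(x, y₂) = log(1/(1 − t|x−a|)), while c_D(x,y₁) = c_D(x,y₂) = t; hence the radii r = log(1 + t|x−a|) and R = log(1/(1 − t|x−a|)) in the inclusion B_j(x,r) ⊂ B_c(x,t) ⊂ B_j(x,R) are best possible. -/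

import Mathlib

open Metric Set

/-- Euclidean `n`-space. -/
abbrev E (n : ℕ) := EuclideanSpace ℝ (Fin n)


private lemma aux1 (t d : ℝ) (hd : d ≠ 0) (hp : (1:ℝ) + t * d ≠ 0) :
    t * d ^ 2 / (1 + t * d) / (d / (1 + t * d)) = t * d := by
  field_simp

private lemma aux2 (t d : ℝ) (hd : d ≠ 0) (hm : (1:ℝ) - t * d ≠ 0) :
    1 + t * d ^ 2 / (1 - t * d) / d = 1 / (1 - t * d) := by
  field_simp; ring

private lemma aux3 (t d : ℝ) (hd : d ≠ 0) (hp : (1:ℝ) + t * d ≠ 0) :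
    t * d ^ 2 / (1 + t * d) / (d * (d / (1 + t * d))) = t := by
  field_simp

private lemma aux4 (t d : ℝ) (hd : d ≠ 0) (hm : (1:ℝ) - t * d ≠ 0) :
    t * d ^ 2 / (1 - t * d) / (d * (d / (1 - t * d))) = t := by
  field_simp

/-- **Sharpness of the `j`-metric inclusions for Cassinian balls of punctured space.**
Let `D = ℝⁿ∖{a}`, `x ∈ D`, `t > 0` with `t|x-a| < 1`, `u = (x-a)/|x-a|`,
`y₁ = x - (t|x-a|²/(1+t|x-a|)) u` and `y₂ = x + (t|x-a|²/(1-t|x-a|)) u`.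
Then `j_D(x,y₁) = log(1 + t|x-a|)` and `j_D(x,y₂) = log(1/(1-t|x-a|))`, while
`c_D(x,y₁) = c_D(x,y₂) = t`; hence the radii `r = log(1 + t|x-a|)` and
`R = log(1/(1-t|x-a|))` in `B_j(x,r) ⊆ B_c(x,t) ⊆ B_j(x,R)` are best possible. -/
theorem cassinian_j_inclusion_sharp (n : ℕ) (hn : 2 ≤ n)
    (a x : E n) (hx : x ≠ a) (t : ℝ) (ht : 0 < t) (ht1 : t * ‖x - a‖ < 1)
    (u y₁ y₂ : E n)
    (hu : u = ‖x - a‖⁻¹ • (x - a))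
    (hy₁ : y₁ = x - (t * ‖x - a‖ ^ 2 / (1 + t * ‖x - a‖)) • u)
    (hy₂ : y₂ = x + (t * ‖x - a‖ ^ 2 / (1 - t * ‖x - a‖)) • u) :
    Real.log (1 + dist x y₁ / min (dist x a) (dist y₁ a))
        = Real.log (1 + t * ‖x - a‖) ∧
      Real.log (1 + dist x y₂ / min (dist x a) (dist y₂ a))
        = Real.log (1 / (1 - t * ‖x - a‖)) ∧
      dist x y₁ / (dist x a * dist y₁ a) = t ∧
      dist x y₂ / (dist x a * dist y₂ a) = t := by
  have hd : (0:ℝ) < ‖x - a‖ := by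
    rw [norm_pos_iff]; exact sub_ne_zero.mpr hx
  set d := ‖x - a‖ with hdef
  have hdne : d ≠ 0 := ne_of_gt hd
  have h1p : (0:ℝ) < 1 + t * d := by nlinarith
  have h1m : (0:ℝ) < 1 - t * d := by linarith
  have htd : 0 < t * d := mul_pos ht hd
  -- vector identities
  have hxy1 : x - y₁ = (t * d / (1 + t * d)) • (x - a) := by
    rw [hy₁, hu, sub_sub_cancel, smul_smul]
    congr 1
    field_simp
  have hy1a : y₁ - a = ((1 + t * d)⁻¹) • (x - a) := by
    rw [hy₁, hu, smul_smul]
    have : x - (t * d ^ 2 / (1 + t * d) * d⁻¹) • (x - a) - a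
        = (1 - t * d ^ 2 / (1 + t * d) * d⁻¹) • (x - a) := by
      rw [sub_smul, one_smul]; abel
    rw [this]
    congr 1
    field_simp; ring
  have hxy2 : x - y₂ = (-(t * d / (1 - t * d))) • (x - a) := by
    rw [hy₂, hu, smul_smul]
    have : x - (x + (t * d ^ 2 / (1 - t * d) * d⁻¹) • (x - a))
        = (-(t * d ^ 2 / (1 - t * d) * d⁻¹)) • (x - a) := by
      rw [neg_smul]; abel
    rw [this]
    congr 1
    field_simp
  have hy2a : y₂ - a = ((1 - t * d)⁻¹) • (x - a) := by
    rw [hy₂, hu, smul_smul]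
    have : x + (t * d ^ 2 / (1 - t * d) * d⁻¹) • (x - a) - a
        = (1 + t * d ^ 2 / (1 - t * d) * d⁻¹) • (x - a) := by
      rw [add_smul, one_smul]; abel
    rw [this]
    congr 1
    field_simp; ring
  -- distances
  have dxa : dist x a = d := by rw [dist_eq_norm]
  have dxy1 : dist x y₁ = t * d ^ 2 / (1 + t * d) := by
    rw [dist_eq_norm, hxy1, norm_smul, Real.norm_eq_abs,
      abs_of_pos (by positivity : (0:ℝ) < t * d / (1 + t * d))]
    field_simp; ring
  have dy1a : dist y₁ a = d / (1 + t * d) := by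
    rw [dist_eq_norm, hy1a, norm_smul, Real.norm_eq_abs,
      abs_of_pos (by positivity : (0:ℝ) < (1 + t * d)⁻¹)]
    field_simp; exact hdef.symm
  have dxy2 : dist x y₂ = t * d ^ 2 / (1 - t * d) := by
    rw [dist_eq_norm, hxy2, norm_smul, Real.norm_eq_abs, abs_neg,
      abs_of_pos (by positivity : (0:ℝ) < t * d / (1 - t * d))]
    field_simp; ring
  have dy2a : dist y₂ a = d / (1 - t * d) := by
    rw [dist_eq_norm, hy2a, norm_smul, Real.norm_eq_abs,
      abs_of_pos (by positivity : (0:ℝ) < (1 - t * d)⁻¹)]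
    field_simp; exact hdef.symm
  have min1 : min (dist x a) (dist y₁ a) = d / (1 + t * d) := by
    rw [dxa, dy1a, min_eq_right]
    rw [div_le_iff₀ h1p]; nlinarith
  have min2 : min (dist x a) (dist y₂ a) = d := by
    rw [dxa, dy2a, min_eq_left]
    rw [le_div_iff₀ h1m]; nlinarith
  have e1 := aux1 t d hdne (ne_of_gt h1p)
  have e2 := aux2 t d hdne (ne_of_gt h1m)
  have e3 := aux3 t d hdne (ne_of_gt h1p)
  have e4 := aux4 t d hdne (ne_of_gt h1m)
  exact ⟨by rw [dxy1, min1, e1], by rw [dxy2, min2, e2], by rw [dxy1, dxa, dy1a, e3],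
    by rw [dxy2, dxa, dy2a, e4]⟩
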